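/- Let h be convex on the real interval [1, M] with M ≥ 3 an integer, and suppose max_{x∈{1,...,M}} h(x) - min_{x∈{1,...,M}} h(x) ≤ (M/20)·ε. Then min_{x∈{1,...,M}} h(x) - min_{x∈[1,M]} h(x) ≤ ε/5. -/

import Mathlib

private lemma comb_lemma (h : ℝ → ℝ) (s : Set ℝ) (hconv : ConvexOn ℝ s h)
    (x y z : ℝ) (hx : x ∈ s) (hy : y ∈ s) (u v : ℝ) (hu : 0 < u) (hv : 0 < v)
    (hz : (u + v) * z = u * x + v * y) :
    (u + v) * h z ≤ u * h x + v * h y := by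
  have huv : 0 < u + v := by linarith
  have hc := hconv.2 hx hy (div_nonneg hu.le huv.le) (div_nonneg hv.le huv.le)
    (by field_simp)
  have harg : (u / (u + v)) • x + (v / (u + v)) • y = z := by
    simp only [smul_eq_mul]
    rw [div_mul_eq_mul_div, div_mul_eq_mul_div, ← add_div, div_eq_iff huv.ne']
    linarith [hz]
  rw [harg] at hc
  simp only [smul_eq_mul] at hc
  have := mul_le_mul_of_nonneg_left hc huv.le
  calc (u + v) * h z ≤ (u + v) * (u / (u + v) * h x + v / (u + v) * h y) := this
    _ = u * h x + v * h y := by field_simp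

private lemma key_lemma (K A B u v ε : ℝ) (M : ℝ) (hM : 0 < M) (hε : 0 < ε)
    (hu : M / 4 ≤ u) (hv : v ≤ 1) (hv0 : 0 ≤ v)
    (hcomb : (u + v) * K ≤ u * A + v * B) (hBK : B - K ≤ M / 20 * ε) :
    K - A ≤ ε / 5 := by
  have hG : (0:ℝ) ≤ M / 20 * ε := by positivity
  have h1 : u * (K - A) ≤ v * (B - K) := by nlinarith [hcomb]
  have h2 : v * (B - K) ≤ M / 20 * ε := by
    calc v * (B - K) ≤ v * (M / 20 * ε) := mul_le_mul_of_nonneg_left hBK hv0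
      _ ≤ 1 * (M / 20 * ε) := mul_le_mul_of_nonneg_right hv hG
      _ = M / 20 * ε := one_mul _
  by_cases hKA : K - A ≤ 0
  · linarith
  · push_neg at hKA
    nlinarith [mul_le_mul_of_nonneg_right hu hKA.le]

theorem stmt_6 (M : ℕ) (hM : 3 ≤ M) (ε : ℝ) (hε : 0 < ε) (h : ℝ → ℝ)
    (hconv : ConvexOn ℝ (Set.Icc (1 : ℝ) (M : ℝ)) h)
    (hgap : ∀ x ∈ Finset.Icc 1 M, ∀ y ∈ Finset.Icc 1 M,
      h (x : ℝ) - h (y : ℝ) ≤ (M : ℝ) / 20 * ε) :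
    ∃ k ∈ Finset.Icc 1 M,
      h (k : ℝ) - sInf (h '' Set.Icc (1 : ℝ) (M : ℝ)) ≤ ε / 5 := by
  have hM1 : (1:ℝ) ≤ (M:ℝ) := by exact_mod_cast (by omega : 1 ≤ M)
  have hMpos : (0:ℝ) < (M:ℝ) := by positivity
  have h1mem : (1:ℝ) ∈ Set.Icc (1:ℝ) (M:ℝ) := ⟨le_refl _, hM1⟩
  have hMmem : (M:ℝ) ∈ Set.Icc (1:ℝ) (M:ℝ) := ⟨hM1, le_refl _⟩
  obtain ⟨k, hk, hkmin⟩ := Finset.exists_min_image (Finset.Icc 1 M)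
    (fun n : ℕ => h (n : ℝ)) ⟨1, Finset.mem_Icc.mpr ⟨le_refl 1, by omega⟩⟩
  refine ⟨k, hk, ?_⟩
  -- main claim : for all x in [1,M], h k - ε/5 ≤ h x
  have main : ∀ x ∈ Set.Icc (1:ℝ) (M:ℝ), h (k:ℝ) - ε/5 ≤ h x := by
    intro x hx
    obtain ⟨hx1, hxM⟩ := hx
    set n : ℕ := ⌊x⌋.toNat with hn
    have hfl : (0:ℤ) ≤ ⌊x⌋ := by
      rw [Int.le_floor]; exact_mod_cast (by push_cast; linarith : ((0:ℤ):ℝ) ≤ x)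
    have hcastn : ((n:ℕ):ℝ) = ((⌊x⌋:ℤ):ℝ) := by
      rw [hn]; exact_mod_cast congrArg (fun z : ℤ => (z:ℝ)) (Int.toNat_of_nonneg hfl)
    have hnx : (n:ℝ) ≤ x := by rw [hcastn]; exact Int.floor_le x
    have hxn : x < (n:ℝ) + 1 := by rw [hcastn]; exact Int.lt_floor_add_one x
    have hn1 : 1 ≤ n := by
      have h1n : (1:ℤ) ≤ ⌊x⌋ := by
        rw [Int.le_floor]; exact_mod_cast hx1
      omega
    have hnM : (n:ℝ) ≤ (M:ℝ) := le_trans hnx hxM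
    have hnMn : n ≤ M := by exact_mod_cast hnM
    by_cases hxeq : x = (n:ℝ)
    · -- x is an integer point
      have : h (k:ℝ) ≤ h (n:ℝ) := hkmin n (by simp [Finset.mem_Icc]; omega)
      rw [hxeq]; linarith
    · have hxgt : (n:ℝ) < x := lt_of_le_of_ne hnx (fun e => hxeq e.symm)
      have hnltM : n < M := by
        by_contra hc
        push_neg at hc
        have : n = M := le_antisymm hnMn hc
        rw [this] at hxgt
        linarith
      have hkn1 : h (k:ℝ) ≤ h ((n:ℝ) + 1) := by
        have := hkmin (n+1) (by simp [Finset.mem_Icc]; omega)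
        push_cast at this
        exact this
      have hkn : h (k:ℝ) ≤ h (n:ℝ) := hkmin n (by simp [Finset.mem_Icc]; omega)
      rcases (by omega : M ≤ 4 * (M - 1 - n) ∨ M ≤ 4 * (n - 1)) with hcase | hcase
    -- right case: use j = n+1, m = M
      · have hucast : (M:ℝ) ≤ 4 * ((M:ℝ) - 1 - (n:ℝ)) := by
          have : (M:ℝ) ≤ 4 * ((M - 1 - n : ℕ) : ℝ) := by exact_mod_cast hcase
          have hsub : ((M - 1 - n : ℕ) : ℝ) = (M:ℝ) - 1 - (n:ℝ) := by
            push_cast [Nat.cast_sub (by omega : n ≤ M - 1), Nat.cast_sub (by omega : 1 ≤ M)]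
            ring
          rwa [hsub] at this
        set u : ℝ := (M:ℝ) - ((n:ℝ) + 1) with hudef
        set v : ℝ := ((n:ℝ) + 1) - x with hvdef
        have hupos : 0 < u := by rw [hudef]; linarith
        have hvpos : 0 < v := by rw [hvdef]; linarith
        have hcomb0 : (u + v) * h ((n:ℝ)+1) ≤ u * h x + v * h (M:ℝ) :=
          comb_lemma h _ hconv x (M:ℝ) ((n:ℝ)+1) ⟨hx1, hxM⟩ hMmem u v hupos hvpos
            (by rw [hudef, hvdef]; ring)
        have huvpos : 0 < u + v := by linarith
        have hcomb : (u + v) * h (k:ℝ) ≤ u * h x + v * h (M:ℝ) :=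
          le_trans (mul_le_mul_of_nonneg_left hkn1 huvpos.le) hcomb0
        have hBK : h (M:ℝ) - h (k:ℝ) ≤ (M:ℝ)/20 * ε := by
          have := hgap M (by simp [Finset.mem_Icc]; omega) k hk
          exact this
        have := key_lemma (h (k:ℝ)) (h x) (h (M:ℝ)) u v ε (M:ℝ) hMpos hε
          (by rw [hudef]; linarith) (by rw [hvdef]; linarith) hvpos.le hcomb hBK
        linarith
      -- left case: use j = n, m = 1
      · have hucast : (M:ℝ) ≤ 4 * ((n:ℝ) - 1) := by
          have : (M:ℝ) ≤ 4 * ((n - 1 : ℕ) : ℝ) := by exact_mod_cast hcase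
          have hsub : ((n - 1 : ℕ) : ℝ) = (n:ℝ) - 1 := by
            push_cast [Nat.cast_sub (by omega : 1 ≤ n)]; ring
          rwa [hsub] at this
        set u : ℝ := (n:ℝ) - 1 with hudef
        set v : ℝ := x - (n:ℝ) with hvdef
        have hupos : 0 < u := by rw [hudef]; nlinarith
        have hvpos : 0 < v := by rw [hvdef]; linarith
        have hcomb0 : (u + v) * h (n:ℝ) ≤ u * h x + v * h (1:ℝ) :=
          comb_lemma h _ hconv x (1:ℝ) (n:ℝ) ⟨hx1, hxM⟩ h1mem u v hupos hvpos
            (by rw [hudef, hvdef]; ring)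
        have huvpos : 0 < u + v := by linarith
        have hcomb : (u + v) * h (k:ℝ) ≤ u * h x + v * h (1:ℝ) :=
          le_trans (mul_le_mul_of_nonneg_left hkn huvpos.le) hcomb0
        have hBK : h (1:ℝ) - h (k:ℝ) ≤ (M:ℝ)/20 * ε := by
          have := hgap 1 (by simp [Finset.mem_Icc]; omega) k hk
          push_cast at this
          exact this
        have := key_lemma (h (k:ℝ)) (h x) (h (1:ℝ)) u v ε (M:ℝ) hMpos hε
          (by rw [hudef]; linarith) (by rw [hvdef]; linarith) hvpos.le hcomb hBK
        linarith
  have hne : (h '' Set.Icc (1:ℝ) (M:ℝ)).Nonempty := ⟨h 1, 1, h1mem, rfl⟩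
  have hlb : ∀ y ∈ h '' Set.Icc (1:ℝ) (M:ℝ), h (k:ℝ) - ε/5 ≤ y := by
    rintro _ ⟨x, hx, rfl⟩
    exact main x hx
  have := le_csInf hne hlb
  linarith
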